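/- Let N ≥ 1, ρ > 0, D ≥ 0, let h : ℝⁿ → ℝ be convex, and for each i = 1,…,N let Jᵢ : ℝⁿ → ℝ be differentiable with Lᵢ-Lipschitz gradient. Let x̃ᵢ, x̃ᵢ⁺, λᵢ, x₀, x₀⁺ ∈ ℝⁿ and γᵢ > 0 satisfy: (a) x₀⁺ is a global minimizer of the map x ↦ L({x̃ᵢ}, x, {λᵢ}); (b) for each i, the map x ↦ Jᵢ(x) + ⟨λᵢ, x − x₀⁺⟩ + (ρ/2)‖x − x₀⁺‖² is γᵢ-strongly convex; (c) ‖∇Jᵢ(x̃ᵢ) + λᵢ‖ ≤ D and ‖∇Jᵢ(x̃ᵢ⁺) + λᵢ + ρ(x̃ᵢ⁺ − x₀⁺)‖ ≤ D for each i; and define λᵢ⁺ := λᵢ + ρ(x̃ᵢ⁺ − x₀⁺). Then L({x̃ᵢ⁺}, x₀⁺, {λᵢ⁺}) − L({x̃ᵢ}, x₀, {λᵢ}) ≤ Σᵢ₌₁ᴺ (2Lᵢ²/ρ − γᵢ/4)‖x̃ᵢ⁺ − x̃ᵢ‖² − (Nρ/2)‖x₀⁺ − x₀‖² + 8ND²/ρ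 + Σᵢ₌₁ᴺ D²/γᵢ. -/

import Mathlib

open RealInnerProductSpace Finset

section Aux

variable {E : Type*} [NormedAddCommGroup E] [InnerProductSpace ℝ E] [CompleteSpace E]

omit [CompleteSpace E] in
lemma combo_norm_sq (u v : E) (t : ℝ) :
    ‖(1 - t) • u + t • v‖ ^ 2
      = (1 - t) * ‖u‖ ^ 2 + t * ‖v‖ ^ 2 - t * (1 - t) * ‖u - v‖ ^ 2 := by
  rw [← real_inner_self_eq_norm_sq, ← real_inner_self_eq_norm_sq,
    ← real_inner_self_eq_norm_sq, ← real_inner_self_eq_norm_sq]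
  simp only [inner_add_add_self, inner_sub_sub_self, real_inner_smul_left,
    real_inner_smul_right, real_inner_comm u v]
  ring

lemma grad_shift (f : E → ℝ) {a : E} (hf : DifferentiableAt ℝ f a) (c b : E) (ρ : ℝ) :
    HasGradientAt (fun z => f z + ⟪c, z - b⟫ + ρ / 2 * ‖z - b‖ ^ 2)
      (gradient f a + c + ρ • (a - b)) a := by
  have h1 : HasFDerivAt f (InnerProductSpace.toDual ℝ E (gradient f a)) a :=
    hf.hasGradientAt.hasFDerivAt
  have h2 : HasFDerivAt (fun z : E => ⟪c, z - b⟫) (innerSL ℝ c) a := by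
    exact ((innerSL ℝ c).hasFDerivAt (x := a - b)).comp a ((hasFDerivAt_id a).sub_const b)
  have h3 : HasFDerivAt (fun z : E => ⟪z - b, z - b⟫)
      ((fderivInnerCLM ℝ (a - b, a - b)).comp
        ((ContinuousLinearMap.id ℝ E).prod (ContinuousLinearMap.id ℝ E))) a := by
    simpa using HasFDerivAt.inner ℝ ((hasFDerivAt_id a).sub_const b)
      ((hasFDerivAt_id a).sub_const b)
  have h3' : HasFDerivAt (fun z : E => ρ / 2 * ‖z - b‖ ^ 2)
      ((ρ / 2) • ((fderivInnerCLM ℝ (a - b, a - b)).comp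
        ((ContinuousLinearMap.id ℝ E).prod (ContinuousLinearMap.id ℝ E)))) a := by
    have := h3.const_mul (ρ / 2)
    convert this using 2 with z
    rfl
    rw [real_inner_self_eq_norm_sq]
  have htot := (h1.add h2).add h3'
  rw [hasGradientAt_iff_hasFDerivAt]
  convert htot using 1
  rfl
  rfl
  rfl
  apply ContinuousLinearMap.ext
  intro y
  simp [InnerProductSpace.toDual_apply_apply, fderivInnerCLM_apply, inner_add_left,
    inner_sub_left, real_inner_smul_left, real_inner_comm (a - b) y]
  ring

end Aux

/-- The augmented Lagrangian
`L({xᵢ}, x₀, {λᵢ}) = h(x₀) + Σᵢ Jᵢ(xᵢ) + Σᵢ ⟨λᵢ, xᵢ − x₀⟩ + Σᵢ (ρ/2)‖xᵢ − x₀‖²`. -/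
noncomputable def augLag {n N : ℕ} (h : EuclideanSpace ℝ (Fin n) → ℝ)
    (J : Fin N → EuclideanSpace ℝ (Fin n) → ℝ) (ρ : ℝ)
    (x : Fin N → EuclideanSpace ℝ (Fin n)) (x0 : EuclideanSpace ℝ (Fin n))
    (lam : Fin N → EuclideanSpace ℝ (Fin n)) : ℝ :=
  h x0 + (∑ i, J i (x i)) + (∑ i, ⟪lam i, x i - x0⟫) + ∑ i, ρ / 2 * ‖x i - x0‖ ^ 2

lemma min_descent {n N : ℕ} (h : EuclideanSpace ℝ (Fin n) → ℝ)
    (hconv : ConvexOn ℝ Set.univ h)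
    (J : Fin N → EuclideanSpace ℝ (Fin n) → ℝ) (ρ : ℝ) (hρ : 0 < ρ)
    (x lam : Fin N → EuclideanSpace ℝ (Fin n)) (x0 x0p : EuclideanSpace ℝ (Fin n))
    (hmin : ∀ y, augLag h J ρ x x0p lam ≤ augLag h J ρ x y lam) :
    augLag h J ρ x x0p lam + ((N : ℝ) * ρ / 2) * ‖x0p - x0‖ ^ 2 ≤ augLag h J ρ x x0 lam := by
  have key : ∀ t : ℝ, 0 ≤ t → t ≤ 1 →
      augLag h J ρ x ((1 - t) • x0p + t • x0) lam ≤
        (1 - t) * augLag h J ρ x x0p lam + t * augLag h J ρ x x0 lam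
          - ((N : ℝ) * ρ / 2) * (t * (1 - t)) * ‖x0p - x0‖ ^ 2 := by
    intro t ht0 ht1
    have hy : ∀ i : Fin N, x i - ((1 - t) • x0p + t • x0)
        = (1 - t) • (x i - x0p) + t • (x i - x0) := by
      intro i; module
    have hh := hconv.2 (Set.mem_univ x0p) (Set.mem_univ x0)
      (by linarith : (0:ℝ) ≤ 1 - t) ht0 (by ring)
    have hper : ∀ i ∈ (univ : Finset (Fin N)),
        ⟪lam i, x i - ((1 - t) • x0p + t • x0)⟫
          + ρ / 2 * ‖x i - ((1 - t) • x0p + t • x0)‖ ^ 2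
        = ((1 - t) * (⟪lam i, x i - x0p⟫ + ρ / 2 * ‖x i - x0p‖ ^ 2)
            + t * (⟪lam i, x i - x0⟫ + ρ / 2 * ‖x i - x0‖ ^ 2))
          - ρ / 2 * (t * (1 - t)) * ‖x0p - x0‖ ^ 2 := by
      intro i _
      rw [hy i, inner_add_right, real_inner_smul_right, real_inner_smul_right, combo_norm_sq]
      have hsub : (x i - x0p) - (x i - x0) = x0 - x0p := by abel
      rw [hsub, norm_sub_rev x0 x0p]
      ring
    have hsum : (∑ i, (⟪lam i, x i - ((1 - t) • x0p + t • x0)⟫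
          + ρ / 2 * ‖x i - ((1 - t) • x0p + t • x0)‖ ^ 2))
        = (1 - t) * (∑ i, (⟪lam i, x i - x0p⟫ + ρ / 2 * ‖x i - x0p‖ ^ 2))
          + t * (∑ i, (⟪lam i, x i - x0⟫ + ρ / 2 * ‖x i - x0‖ ^ 2))
          - (N : ℝ) * (ρ / 2 * (t * (1 - t)) * ‖x0p - x0‖ ^ 2) := by
      rw [Finset.sum_congr rfl hper, Finset.sum_sub_distrib, Finset.sum_add_distrib,
        ← Finset.mul_sum, ← Finset.mul_sum, Finset.sum_const, Finset.card_univ,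
        Fintype.card_fin, nsmul_eq_mul]
    unfold augLag
    simp only [smul_eq_mul] at hh
    simp only [Finset.sum_add_distrib] at hsum
    nlinarith [hh, hsum]
  have step2 : ∀ t : ℝ, 0 < t → t < 1 →
      ((N : ℝ) * ρ / 2) * (1 - t) * ‖x0p - x0‖ ^ 2
        ≤ augLag h J ρ x x0 lam - augLag h J ρ x x0p lam := by
    intro t ht0 ht1
    have h5 := hmin ((1 - t) • x0p + t • x0)
    have h6 := key t ht0.le ht1.le
    have h7 : t * (((N : ℝ) * ρ / 2) * (1 - t) * ‖x0p - x0‖ ^ 2)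
        ≤ t * (augLag h J ρ x x0 lam - augLag h J ρ x x0p lam) := by nlinarith
    exact (mul_le_mul_iff_right₀ ht0).mp h7
  have hc : (0:ℝ) ≤ (N : ℝ) * ρ / 2 := by positivity
  have hs : (0:ℝ) ≤ ‖x0p - x0‖ ^ 2 := sq_nonneg _
  have hfinal : ((N : ℝ) * ρ / 2) * ‖x0p - x0‖ ^ 2
      ≤ augLag h J ρ x x0 lam - augLag h J ρ x x0p lam := by
    apply le_of_forall_pos_le_add
    intro ε hε
    set c := (N : ℝ) * ρ / 2 with hcdef
    set s := ‖x0p - x0‖ ^ 2 with hsdef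
    set t := min (1/2 : ℝ) (ε / (c * s + 1)) with htdef
    have hcs : (0:ℝ) ≤ c * s := mul_nonneg hc hs
    have ht0 : 0 < t := lt_min (by norm_num) (div_pos hε (by linarith))
    have ht1 : t < 1 := lt_of_le_of_lt (min_le_left _ _) (by norm_num)
    have h7 := step2 t ht0 ht1
    have h9 : t * (c * s) ≤ ε := by
      calc t * (c * s) ≤ (ε / (c * s + 1)) * (c * s + 1) := by
            apply mul_le_mul (min_le_right _ _) (by linarith) hcs
              (le_of_lt (div_pos hε (by linarith)))
        _ = ε := div_mul_cancel₀ _ (by linarith)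
    nlinarith
  linarith

/-- paper's Lemma 2: descent of the augmented Lagrangian across one
sensitivity-assisted ADMM iteration. -/
theorem augmented_lagrangian_descent {n N : ℕ} (hN : 1 ≤ N) (ρ : ℝ) (hρ : 0 < ρ)
    (D : ℝ) (hD : 0 ≤ D)
    (h : EuclideanSpace ℝ (Fin n) → ℝ) (hconv : ConvexOn ℝ Set.univ h)
    (J : Fin N → EuclideanSpace ℝ (Fin n) → ℝ)
    (hJ : ∀ i, Differentiable ℝ (J i))
    (Li : Fin N → ℝ)
    (hLip : ∀ i, ∀ a b : EuclideanSpace ℝ (Fin n),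
      ‖gradient (J i) a - gradient (J i) b‖ ≤ Li i * ‖a - b‖)
    (x xp lam : Fin N → EuclideanSpace ℝ (Fin n))
    (x0 x0p : EuclideanSpace ℝ (Fin n))
    (γ : Fin N → ℝ) (hγ : ∀ i, 0 < γ i)
    -- (a) x₀⁺ is a global minimizer of x ↦ L({x̃ᵢ}, x, {λᵢ})
    (hmin : ∀ y, augLag h J ρ x x0p lam ≤ augLag h J ρ x y lam)
    -- (b) each subproblem objective is γᵢ-strongly convex
    (hsc : ∀ i, ∀ a b : EuclideanSpace ℝ (Fin n),
      (J i a + ⟪lam i, a - x0p⟫ + ρ / 2 * ‖a - x0p‖ ^ 2) -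
        (J i b + ⟪lam i, b - x0p⟫ + ρ / 2 * ‖b - x0p‖ ^ 2) ≤
      ⟪gradient (fun z => J i z + ⟪lam i, z - x0p⟫ + ρ / 2 * ‖z - x0p‖ ^ 2) a,
        a - b⟫ - γ i / 2 * ‖a - b‖ ^ 2)
    -- (c) approximate stationarity
    (h1 : ∀ i, ‖gradient (J i) (x i) + lam i‖ ≤ D)
    (h2 : ∀ i, ‖gradient (J i) (xp i) + lam i + ρ • (xp i - x0p)‖ ≤ D)
    (lamp : Fin N → EuclideanSpace ℝ (Fin n))
    (hlamp : ∀ i, lamp i = lam i + ρ • (xp i - x0p)) :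
    augLag h J ρ xp x0p lamp - augLag h J ρ x x0 lam ≤
      (∑ i, (2 * (Li i) ^ 2 / ρ - γ i / 4) * ‖xp i - x i‖ ^ 2)
        - (N * ρ / 2) * ‖x0p - x0‖ ^ 2 + 8 * N * D ^ 2 / ρ + ∑ i, D ^ 2 / γ i := by
  -- Expand the difference at fixed x0p
  have hin : ∀ i ∈ (univ : Finset (Fin N)), ⟪lamp i, xp i - x0p⟫
      = ⟪lam i, xp i - x0p⟫ + ρ * ‖xp i - x0p‖ ^ 2 := by
    intro i _
    rw [hlamp i, inner_add_left, real_inner_smul_left, real_inner_self_eq_norm_sq]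
  have expand : augLag h J ρ xp x0p lamp - augLag h J ρ x x0p lam
      = ∑ i, ((J i (xp i) + ⟪lam i, xp i - x0p⟫ + ρ / 2 * ‖xp i - x0p‖ ^ 2)
          + ρ * ‖xp i - x0p‖ ^ 2
          - (J i (x i) + ⟪lam i, x i - x0p⟫ + ρ / 2 * ‖x i - x0p‖ ^ 2)) := by
    unfold augLag
    rw [Finset.sum_congr rfl hin]
    simp only [Finset.sum_sub_distrib, Finset.sum_add_distrib]
    ring
  -- per-index bound
  have keyi : ∀ i ∈ (univ : Finset (Fin N)),
      ((J i (xp i) + ⟪lam i, xp i - x0p⟫ + ρ / 2 * ‖xp i - x0p‖ ^ 2)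
          + ρ * ‖xp i - x0p‖ ^ 2
          - (J i (x i) + ⟪lam i, x i - x0p⟫ + ρ / 2 * ‖x i - x0p‖ ^ 2))
        ≤ (2 * (Li i) ^ 2 / ρ - γ i / 4) * ‖xp i - x i‖ ^ 2 + (8 * D ^ 2 / ρ + D ^ 2 / γ i) := by
    intro i _
    set s := ‖xp i - x i‖ with hsdef
    have hs0 : 0 ≤ s := norm_nonneg _
    have hA := hsc i (xp i) (x i)
    rw [(grad_shift (J i) (hJ i (xp i)) (lam i) x0p ρ).gradient] at hA
    have hg := h2 i
    have hinner : ⟪gradient (J i) (xp i) + lam i + ρ • (xp i - x0p), xp i - x i⟫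
        ≤ D * s := by
      calc ⟪gradient (J i) (xp i) + lam i + ρ • (xp i - x0p), xp i - x i⟫
          ≤ ‖gradient (J i) (xp i) + lam i + ρ • (xp i - x0p)‖ * ‖xp i - x i‖ :=
            real_inner_le_norm _ _
        _ ≤ D * s := mul_le_mul_of_nonneg_right hg (norm_nonneg _)
    have hDs : D * s ≤ D ^ 2 / γ i + γ i / 4 * s ^ 2 := by
      have hγi := hγ i
      have hid : D ^ 2 / γ i + γ i / 4 * s ^ 2 - D * s = (D - γ i / 2 * s) ^ 2 / γ i := by
        field_simp
        ring
      nlinarith [div_nonneg (sq_nonneg (D - γ i / 2 * s)) hγi.le]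
    have hLnn : 0 ≤ Li i * s := le_trans (norm_nonneg _) (hLip i (xp i) (x i))
    have hvec : ρ • (xp i - x0p)
        = (gradient (J i) (xp i) + lam i + ρ • (xp i - x0p))
          - (gradient (J i) (x i) + lam i)
          - (gradient (J i) (xp i) - gradient (J i) (x i)) := by abel
    have hn1 : ρ * ‖xp i - x0p‖ ≤ 2 * D + Li i * s := by
      have hns : ‖ρ • (xp i - x0p)‖ = ρ * ‖xp i - x0p‖ := by
        rw [norm_smul, Real.norm_eq_abs, abs_of_pos hρ]
      rw [← hns, hvec]
      calc ‖(gradient (J i) (xp i) + lam i + ρ • (xp i - x0p))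
            - (gradient (J i) (x i) + lam i)
            - (gradient (J i) (xp i) - gradient (J i) (x i))‖
          ≤ ‖(gradient (J i) (xp i) + lam i + ρ • (xp i - x0p))
              - (gradient (J i) (x i) + lam i)‖
            + ‖gradient (J i) (xp i) - gradient (J i) (x i)‖ := norm_sub_le _ _
        _ ≤ ‖gradient (J i) (xp i) + lam i + ρ • (xp i - x0p)‖
            + ‖gradient (J i) (x i) + lam i‖
            + ‖gradient (J i) (xp i) - gradient (J i) (x i)‖ := by
            linarith [norm_sub_le (gradient (J i) (xp i) + lam i + ρ • (xp i - x0p))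
              (gradient (J i) (x i) + lam i)]
        _ ≤ 2 * D + Li i * s := by
            have := hLip i (xp i) (x i)
            have := h1 i
            linarith
    have hw0 : 0 ≤ ρ * ‖xp i - x0p‖ := mul_nonneg hρ.le (norm_nonneg _)
    have hsq : (ρ * ‖xp i - x0p‖) ^ 2 ≤ 8 * D ^ 2 + 2 * (Li i) ^ 2 * s ^ 2 := by
      nlinarith [sq_nonneg (2 * D - Li i * s), hn1, hw0, hD, hLnn]
    have hfin : ρ * ‖xp i - x0p‖ ^ 2 ≤ 8 * D ^ 2 / ρ + 2 * (Li i) ^ 2 / ρ * s ^ 2 := by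
      have h10 : ρ * ‖xp i - x0p‖ ^ 2 = (ρ * ‖xp i - x0p‖) ^ 2 / ρ := by
        field_simp
      have h11 : 8 * D ^ 2 / ρ + 2 * (Li i) ^ 2 / ρ * s ^ 2
          = (8 * D ^ 2 + 2 * (Li i) ^ 2 * s ^ 2) / ρ := by ring
      rw [h10, h11]
      gcongr
    linarith
  have hsum2 := Finset.sum_le_sum keyi
  rw [Finset.sum_add_distrib, Finset.sum_add_distrib, Finset.sum_const, Finset.card_univ,
    Fintype.card_fin, nsmul_eq_mul] at hsum2
  have hmd := min_descent h hconv J ρ hρ x lam x0 x0p hmin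
  have split : augLag h J ρ xp x0p lamp - augLag h J ρ x x0 lam
      = (augLag h J ρ xp x0p lamp - augLag h J ρ x x0p lam)
        + (augLag h J ρ x x0p lam - augLag h J ρ x x0 lam) := by ring
  rw [split, expand]
  have hcast : (N : ℝ) * (8 * D ^ 2 / ρ) = 8 * (N : ℝ) * D ^ 2 / ρ := by ring
  linarith
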